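/- Let H : Σ → ℝ be continuous with summable variation. For each β > 0, the Gibbs measure μ_β := Φ_β ν_β / ∫ Φ_β dν_β is a σ-invariant Borel probability measure on Σ, and any weak* accumulation point of (μ_β) as β → +∞ (i.e. any weak* limit of μ_{β_j} along a sequence β_j → +∞) is a minimizing measure of H. -/

import Mathlib

open MeasureTheory Filter Topology
open scoped ENNReal NNReal

/-- The one-sided full shift space on two symbols. -/
abbrev Sig : Type := ℕ → Fin 2

/-- The left shift map. -/
def shft : Sig → Sig := fun x n => x (n + 1)

/-- Concatenation of a symbol with a configuration. -/
def cons2 (i : Fin 2) (x : Sig) : Sig := fun n => match n with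
  | 0 => i
  | Nat.succ k => x k

/-- `x` and `y` agree on their first `n` coordinates. -/
def nClose (n : ℕ) (x y : Sig) : Prop := ∀ k, k < n → x k = y k

/-- The `n`-th variation of `H`. -/
noncomputable def Var (H : Sig → ℝ) (n : ℕ) : ℝ :=
  sSup {d : ℝ | ∃ x y : Sig, nClose n x y ∧ d = |H x - H y|}

/-- `H` has summable variation. -/
def SummableVar (H : Sig → ℝ) : Prop := Summable (fun n : ℕ => Var H (n + 1))

/-- The transfer operator at inverse temperature `β`. -/
noncomputable def transfer (β : ℝ) (H : Sig → ℝ) (Φ : Sig → ℝ) : Sig → ℝ :=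
  fun x => Real.exp (-β * H (cons2 0 x)) * Φ (cons2 0 x)
         + Real.exp (-β * H (cons2 1 x)) * Φ (cons2 1 x)

/-- The cylinder set determined by a finite word. -/
def cyl (w : List (Fin 2)) : Set Sig := {x | ∀ i : ℕ, ∀ h : i < w.length, x i = w.get ⟨i, h⟩}

/-- The fixed point `0^∞`. -/
def zpt : Sig := fun _ => 0

/-- The fixed point `1^∞`. -/
def opt : Sig := fun _ => 1

/-- The minimizing ergodic value of `H`. -/
noncomputable def Hbar (H : Sig → ℝ) : ℝ :=
  sInf {r : ℝ | ∃ μ : Measure Sig, IsProbabilityMeasure μ ∧ μ.map shft = μ ∧ r = ∫ x, H x ∂μ}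

/-- A minimizing measure for `H`. -/
def IsMinimizing (H : Sig → ℝ) (μ : Measure Sig) : Prop :=
  IsProbabilityMeasure μ ∧ μ.map shft = μ ∧
  ∀ ν : Measure Sig, IsProbabilityMeasure ν → ν.map shft = ν →
    ∫ x, H x ∂μ ≤ ∫ x, H x ∂ν

/-- The (topological) support of a measure. -/
def mSupport (μ : Measure Sig) : Set Sig := {x | ∀ U : Set Sig, IsOpen U → x ∈ U → μ U ≠ 0}

/-- The Mather set of `H` : union of supports of minimizing measures. -/
def mather (H : Sig → ℝ) : Set Sig := {x | ∃ μ : Measure Sig, IsMinimizing H μ ∧ x ∈ mSupport μ}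

/-- Birkhoff sum of the normalized potential. -/
noncomputable def birk (H : Sig → ℝ) (k : ℕ) (z : Sig) : ℝ :=
  ∑ i ∈ Finset.range k, (H (shft^[i] z) - Hbar H)

/-- The quantity `S_n^p(x,y)` (an infimum in `EReal`, `+∞` when the defining set is empty). -/
noncomputable def SBar (H : Sig → ℝ) (p n : ℕ) (x y : Sig) : EReal :=
  sInf {s : EReal | ∃ k : ℕ, n ≤ k ∧ ∃ z : Sig, nClose p z x ∧ nClose p (shft^[k] z) y ∧
    s = (birk H k z : EReal)}

/-- The Peierls barrier `h(x,y)`; since `S_n^p(x,y)` is nondecreasing in both `n` and `p`,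
the double limit is a double supremum. -/
noncomputable def peierls (H : Sig → ℝ) (x y : Sig) : EReal := ⨆ p : ℕ, ⨆ n : ℕ, SBar H p n x y

/-- The Lax-Oleinik operator (the two preimages of `y` under the shift are `0y` and `1y`). -/
noncomputable def laxOleinik (H V : Sig → ℝ) : Sig → ℝ :=
  fun y => min (V (cons2 0 y) + H (cons2 0 y)) (V (cons2 1 y) + H (cons2 1 y))

/-- A calibrated sub-action of `H`. -/
def IsCalibrated (H V : Sig → ℝ) : Prop :=
  Continuous V ∧ laxOleinik H V = fun y => V y + Hbar H

/-- Membership in the class `𝕂`. -/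
def InK (H V : Sig → ℝ) : Prop :=
  Continuous V ∧ ∀ n : ℕ, 1 ≤ n → Var V n ≤ ∑' k : ℕ, Var H (n + 1 + k)

/-- A reduced double-well type potential with data `(H_n^0)`, `(H_n^1)` (indexed from `n = 1`). -/
structure ReducedDW (H : Sig → ℝ) (H0 H1 : ℕ → ℝ) : Prop where
  cont : Continuous H
  nonneg : ∀ x, 0 ≤ H x
  svar : SummableVar H
  zero : ∀ x ∈ cyl [0, 0] ∪ cyl [1, 1], H x = 0
  pos0 : ∀ n, 1 ≤ n → 0 < H0 n
  pos1 : ∀ n, 1 ≤ n → 0 < H1 n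
  val0 : ∀ n, 1 ≤ n → ∀ x ∈ cyl (0 :: (List.replicate n 1 ++ [0])), H x = H0 n
  val1 : ∀ n, 1 ≤ n → ∀ x ∈ cyl (1 :: (List.replicate n 0 ++ [1])), H x = H1 n
  bdd0 : ∀ k : ℕ, BddAbove (Set.range fun n : ℕ => |H0 (k + 1) - H0 (k + 1 + n)|)
  bdd1 : ∀ k : ℕ, BddAbove (Set.range fun n : ℕ => |H1 (k + 1) - H1 (k + 1 + n)|)
  sum0 : Summable (fun k : ℕ => ⨆ n : ℕ, |H0 (k + 1) - H0 (k + 1 + n)|)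
  sum1 : Summable (fun k : ℕ => ⨆ n : ℕ, |H1 (k + 1) - H1 (k + 1 + n)|)

/-- A double-well type potential with data `a_n^0, a_n^1, b_n^0, b_n^1` (indexed from `n = 1`). -/
structure DW (H : Sig → ℝ) (a0 a1 b0 b1 : ℕ → ℝ) : Prop where
  cont : Continuous H
  nonneg : ∀ x, 0 ≤ H x
  svar : SummableVar H
  anneg0 : ∀ n, 1 ≤ n → 0 ≤ a0 n
  anneg1 : ∀ n, 1 ≤ n → 0 ≤ a1 n
  bpos0 : ∀ n, 1 ≤ n → 0 < b0 n
  bpos1 : ∀ n, 1 ≤ n → 0 < b1 n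
  vala0 : ∀ n, 1 ≤ n → ∀ x ∈ cyl (0 :: (List.replicate n 0 ++ [1])), H x = a0 n
  vala1 : ∀ n, 1 ≤ n → ∀ x ∈ cyl (1 :: (List.replicate n 1 ++ [0])), H x = a1 n
  valb0 : ∀ n, 1 ≤ n → ∀ x ∈ cyl (0 :: (List.replicate n 1 ++ [0])), H x = b0 n
  valb1 : ∀ n, 1 ≤ n → ∀ x ∈ cyl (1 :: (List.replicate n 0 ++ [1])), H x = b1 n
  suma0 : Summable (fun n : ℕ => ((n + 1 : ℕ) : ℝ) * a0 (n + 1))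
  suma1 : Summable (fun n : ℕ => ((n + 1 : ℕ) : ℝ) * a1 (n + 1))
  bddb0 : ∀ k : ℕ, BddAbove (Set.range fun n : ℕ => |b0 (k + 1) - b0 (k + 1 + n)|)
  bddb1 : ∀ k : ℕ, BddAbove (Set.range fun n : ℕ => |b1 (k + 1) - b1 (k + 1 + n)|)
  sumb0 : Summable (fun k : ℕ => ⨆ n : ℕ, |b0 (k + 1) - b0 (k + 1 + n)|)
  sumb1 : Summable (fun k : ℕ => ⨆ n : ℕ, |b1 (k + 1) - b1 (k + 1 + n)|)

/-- The series `F_β(λ) = Σ_{k≥1} λ^{-k} e^{-β H_k}`. -/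
noncomputable def Fser (β : ℝ) (Hs : ℕ → ℝ) (lam : ℝ) : ℝ :=
  ∑' k : ℕ, (lam ^ (k + 1))⁻¹ * Real.exp (-β * Hs (k + 1))

/-- The series `F̃_β(λ) = Σ_{k≥1} k λ^{-k} e^{-β H_k}`. -/
noncomputable def Ftser (β : ℝ) (Hs : ℕ → ℝ) (lam : ℝ) : ℝ :=
  ∑' k : ℕ, ((k + 1 : ℕ) : ℝ) * (lam ^ (k + 1))⁻¹ * Real.exp (-β * Hs (k + 1))

/-- The data of the Ruelle-Perron-Frobenius solution and Gibbs measure at inverse temperature `β`: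
eigenfunction `Φ` (positive, continuous, max 1), eigenvalue `lam`, eigenprobability `ν`,
and the Gibbs measure `μ = Φ ν / ∫ Φ dν`. -/
def GibbsData (H : Sig → ℝ) (β : ℝ) (Φ : Sig → ℝ) (lam : ℝ) (ν μ : Measure Sig) : Prop :=
  Continuous Φ ∧ (∀ x, 0 < Φ x) ∧ IsGreatest (Set.range Φ) 1 ∧ 0 < lam ∧
  (transfer β H Φ = fun x => lam * Φ x) ∧
  IsProbabilityMeasure ν ∧
  (∀ f : Sig → ℝ, Continuous f → ∫ x, transfer β H f x ∂ν = lam * ∫ x, f x ∂ν) ∧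
  μ = (ENNReal.ofReal (∫ x, Φ x ∂ν))⁻¹ • ν.withDensity (fun x => ENNReal.ofReal (Φ x))


section Helpers

open MeasureTheory Filter Topology
open scoped ENNReal NNReal

lemma cont_shft : Continuous shft := continuous_pi fun n => continuous_apply (n + 1)

lemma meas_shft : Measurable shft := cont_shft.measurable

lemma shft_cons2 (i : Fin 2) (y : Sig) : shft (cons2 i y) = y := rfl

lemma cons2_eta (x : Sig) : cons2 (x 0) (shft x) = x := by
  funext n; cases n <;> rfl

lemma cont_cons2 (i : Fin 2) : Continuous (cons2 i) := by
  apply continuous_pi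
  intro n
  cases n with
  | zero => exact continuous_const
  | succ k => exact continuous_apply k

lemma integ {f : Sig → ℝ} (hf : Continuous f) (μ : Measure Sig) [IsFiniteMeasure μ] :
    Integrable f μ :=
  hf.integrable_of_hasCompactSupport (HasCompactSupport.of_compactSpace f)

lemma gibbs_main {H : Sig → ℝ} (hHc : Continuous H) {β : ℝ} (hβ : 0 < β)
    {Φ : Sig → ℝ} {lam : ℝ} {ν μ : Measure Sig} (hGd : GibbsData H β Φ lam ν μ) :
    IsProbabilityMeasure μ ∧ μ.map shft = μ ∧
    ∀ ρ : Measure Sig, IsProbabilityMeasure ρ → ρ.map shft = ρ →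
      ∫ x, H x ∂μ ≤ (∫ x, H x ∂ρ) + Real.log 2 / β := by
  obtain ⟨hΦc, hΦpos, hΦmax, hlam, heig, hνp, hνeig, hμdef⟩ := hGd
  have hΦle1 : ∀ x, Φ x ≤ 1 := fun x => hΦmax.2 ⟨x, rfl⟩
  have hΦint : Integrable Φ ν := integ hΦc ν
  have hc0 : 0 < ∫ x, Φ x ∂ν := by
    obtain ⟨x0, -, hx0⟩ := isCompact_univ.exists_isMinOn Set.univ_nonempty hΦc.continuousOn
    have hmin : ∀ x, Φ x0 ≤ Φ x := fun x => isMinOn_iff.mp hx0 x (Set.mem_univ x)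
    have h1 : (Φ x0 : ℝ) = ∫ _x, Φ x0 ∂ν := by simp
    calc (0:ℝ) < Φ x0 := hΦpos x0
    _ = ∫ _x, Φ x0 ∂ν := h1
    _ ≤ ∫ x, Φ x ∂ν := integral_mono (integrable_const _) hΦint hmin
  set c : ℝ := ∫ x, Φ x ∂ν with hc
  -- integrals against μ
  have hμint : ∀ {f : Sig → ℝ}, Continuous f → ∫ x, f x ∂μ = c⁻¹ * ∫ x, f x * Φ x ∂ν := by
    intro f hf
    have hmeas : Measurable fun x => (Φ x).toNNReal :=
      (continuous_real_toNNReal.comp hΦc).measurable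
    rw [hμdef, integral_smul_measure]
    have hd : (fun x => ENNReal.ofReal (Φ x)) = fun x => ((Φ x).toNNReal : ℝ≥0∞) := rfl
    rw [hd, integral_withDensity_eq_integral_smul hmeas f]
    have h1 : ((ENNReal.ofReal c)⁻¹).toReal = c⁻¹ := by
      rw [ENNReal.toReal_inv, ENNReal.toReal_ofReal hc0.le]
    rw [h1]
    simp only [smul_eq_mul]
    congr 1
    apply integral_congr_ae
    filter_upwards with x
    simp [NNReal.smul_def, Real.coe_toNNReal _ (hΦpos x).le, mul_comm]
  have hμprob : IsProbabilityMeasure μ := by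
    constructor
    rw [hμdef]
    simp only [Measure.smul_apply, smul_eq_mul]
    rw [withDensity_apply _ MeasurableSet.univ, setLIntegral_univ,
      ← ofReal_integral_eq_lintegral_ofReal hΦint
        (Filter.Eventually.of_forall fun x => (hΦpos x).le)]
    exact ENNReal.inv_mul_cancel (ENNReal.ofReal_pos.mpr hc0).ne' ENNReal.ofReal_ne_top
  haveI := hμprob
  -- key transfer identity
  have key : ∀ f : Sig → ℝ, Continuous f →
      ∫ x, f (shft x) * Φ x ∂ν = ∫ x, f x * Φ x ∂ν := by
    intro f hf
    have hfsc : Continuous fun x => f (shft x) * Φ x := ((hf.comp cont_shft).mul hΦc)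
    have h1 := hνeig (fun x => f (shft x) * Φ x) hfsc
    have h2 : ∀ y, transfer β H (fun x => f (shft x) * Φ x) y = lam * (f y * Φ y) := by
      intro y
      have heigy := congrFun heig y
      simp only [transfer] at heigy ⊢
      simp only [shft_cons2]
      linear_combination (f y) * heigy
    have h3 : ∫ y, transfer β H (fun x => f (shft x) * Φ x) y ∂ν = lam * ∫ y, f y * Φ y ∂ν := by
      simp only [h2]
      exact integral_const_mul lam _
    exact mul_left_cancel₀ hlam.ne' (h1.symm.trans h3)
  -- shift invariance of μ
  have hμinv : μ.map shft = μ := by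
    haveI : IsProbabilityMeasure (μ.map shft) := Measure.isProbabilityMeasure_map meas_shft.aemeasurable
    apply ext_of_forall_lintegral_eq_of_IsFiniteMeasure
    intro f
    have hfc : Continuous fun x => (f x : ℝ) := NNReal.continuous_coe.comp f.continuous
    rw [lintegral_coe_eq_integral f (integ hfc _), lintegral_coe_eq_integral f (integ hfc _)]
    congr 1
    have hfsc : Continuous fun x => (f (shft x) : ℝ) := hfc.comp cont_shft
    rw [integral_map meas_shft.aemeasurable hfc.aestronglyMeasurable,
      hμint hfsc, hμint hfc, key _ hfc]
  -- the function g and probabilities p0 p1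
  set g : Sig → ℝ :=
    fun x => β * H x + (Real.log (Φ (shft x)) - Real.log (Φ x)) + Real.log lam with hg
  have hlogΦ : Continuous fun x => Real.log (Φ x) := hΦc.log fun x => (hΦpos x).ne'
  have hgc : Continuous g := by
    apply Continuous.add
    apply Continuous.add (continuous_const.mul hHc)
    exact (hlogΦ.comp cont_shft).sub hlogΦ
    exact continuous_const
  set p0 : Sig → ℝ :=
    fun y => Real.exp (-β * H (cons2 0 y)) * Φ (cons2 0 y) / (lam * Φ y) with hp0
  set p1 : Sig → ℝ :=
    fun y => Real.exp (-β * H (cons2 1 y)) * Φ (cons2 1 y) / (lam * Φ y) with hp1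
  have hden : ∀ y : Sig, lam * Φ y ≠ 0 := fun y => (mul_pos hlam (hΦpos y)).ne'
  have hpsum : ∀ y, p0 y + p1 y = 1 := by
    intro y
    have heigy := congrFun heig y
    simp only [transfer] at heigy
    simp only [hp0, hp1]
    rw [← add_div, div_eq_one_iff_eq (hden y)]
    exact heigy
  have hp0pos : ∀ y, 0 < p0 y :=
    fun y => div_pos (mul_pos (Real.exp_pos _) (hΦpos _)) (mul_pos hlam (hΦpos y))
  have hp1pos : ∀ y, 0 < p1 y :=
    fun y => div_pos (mul_pos (Real.exp_pos _) (hΦpos _)) (mul_pos hlam (hΦpos y))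
  have hp0le : ∀ y, p0 y ≤ 1 := fun y => by linarith [hpsum y, hp1pos y]
  have hp1le : ∀ y, p1 y ≤ 1 := fun y => by linarith [hpsum y, hp0pos y]
  have hglog0 : ∀ y, g (cons2 0 y) = -Real.log (p0 y) := by
    intro y
    simp only [hg, hp0, shft_cons2]
    rw [Real.log_div (mul_pos (Real.exp_pos _) (hΦpos _)).ne' (hden y),
      Real.log_mul (Real.exp_pos _).ne' (hΦpos _).ne', Real.log_exp,
      Real.log_mul hlam.ne' (hΦpos y).ne']
    ring
  have hglog1 : ∀ y, g (cons2 1 y) = -Real.log (p1 y) := by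
    intro y
    simp only [hg, hp1, shft_cons2]
    rw [Real.log_div (mul_pos (Real.exp_pos _) (hΦpos _)).ne' (hden y),
      Real.log_mul (Real.exp_pos _).ne' (hΦpos _).ne', Real.log_exp,
      Real.log_mul hlam.ne' (hΦpos y).ne']
    ring
  set G : Sig → ℝ := fun y => p0 y * g (cons2 0 y) + p1 y * g (cons2 1 y) with hG
  have hGle : ∀ y, G y ≤ Real.log 2 := by
    intro y
    have h1 : p1 y = 1 - p0 y := by linarith [hpsum y]
    have h2 : G y = Real.binEntropy (p0 y) := by
      simp only [hG]
      rw [hglog0 y, hglog1 y, h1, Real.binEntropy, Real.log_inv, Real.log_inv]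
    rw [h2]
    exact Real.binEntropy_le_log_two
  have hGc : Continuous G := by
    have hnum0 : Continuous fun y => Real.exp (-β * H (cons2 0 y)) * Φ (cons2 0 y) := by
      apply Continuous.mul
      · exact Real.continuous_exp.comp (continuous_const.mul (hHc.comp (cont_cons2 0)))
      · exact hΦc.comp (cont_cons2 0)
    have hnum1 : Continuous fun y => Real.exp (-β * H (cons2 1 y)) * Φ (cons2 1 y) := by
      apply Continuous.mul
      · exact Real.continuous_exp.comp (continuous_const.mul (hHc.comp (cont_cons2 1)))
      · exact hΦc.comp (cont_cons2 1)
    have hcp0 : Continuous p0 := by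
      rw [hp0]; exact hnum0.div (continuous_const.mul hΦc) hden
    have hcp1 : Continuous p1 := by
      rw [hp1]; exact hnum1.div (continuous_const.mul hΦc) hden
    exact (hcp0.mul (hgc.comp (cont_cons2 0))).add (hcp1.mul (hgc.comp (cont_cons2 1)))
  -- ∫ G dμ = ∫ g dμ
  have hGg : ∫ y, G y ∂μ = ∫ y, g y ∂μ := by
    rw [hμint hGc, hμint hgc]
    congr 1
    have h1 := hνeig (fun x => g x * Φ x) (hgc.mul hΦc)
    have h2 : ∀ y, transfer β H (fun x => g x * Φ x) y = lam * (G y * Φ y) := by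
      intro y
      simp only [transfer, hG, hg, hp0, hp1, shft_cons2]
      field_simp [hlam.ne', (hΦpos y).ne']
    have h3 : ∫ y, transfer β H (fun x => g x * Φ x) y ∂ν = lam * ∫ y, G y * Φ y ∂ν := by
      simp only [h2]
      exact integral_const_mul lam _
    exact mul_left_cancel₀ hlam.ne' (h3.symm.trans h1)
  -- telescoping identity for invariant probability measures
  have htel : ∀ ρ : Measure Sig, IsProbabilityMeasure ρ → ρ.map shft = ρ →
      ∫ x, g x ∂ρ = β * (∫ x, H x ∂ρ) + Real.log lam := by
    intro ρ hρp hρinv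
    haveI := hρp
    have hlsc : Continuous fun x => Real.log (Φ (shft x)) := hlogΦ.comp cont_shft
    have e1 : ∫ x, Real.log (Φ (shft x)) ∂ρ = ∫ x, Real.log (Φ x) ∂ρ := by
      conv_rhs => rw [← hρinv]
      rw [integral_map meas_shft.aemeasurable hlogΦ.aestronglyMeasurable]
    have i1 : Integrable (fun x => β * H x) ρ := (integ hHc ρ).const_mul β
    have i2 : Integrable (fun x => Real.log (Φ (shft x)) - Real.log (Φ x)) ρ :=
      (integ hlsc ρ).sub (integ hlogΦ ρ)
    have i3 : Integrable (fun x => β * H x + (Real.log (Φ (shft x)) - Real.log (Φ x))) ρ :=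
      i1.add i2
    simp only [hg]
    rw [integral_add i3 (integrable_const _), integral_add i1 i2,
      integral_sub (integ hlsc ρ) (integ hlogΦ ρ), e1, integral_const_mul]
    simp
  -- g is nonnegative
  have hgnn : ∀ x, 0 ≤ g x := by
    intro x
    have hx : cons2 (x 0) (shft x) = x := cons2_eta x
    have h2 : x 0 = 0 ∨ x 0 = 1 := by omega
    have hcase : g x = -Real.log (p0 (shft x)) ∨ g x = -Real.log (p1 (shft x)) := by
      rcases h2 with h | h
      · left; rw [← hx, h]; exact hglog0 _
      · right; rw [← hx, h]; exact hglog1 _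
    rcases hcase with h | h <;> rw [h] <;> rw [neg_nonneg]
    · exact Real.log_nonpos (hp0pos _).le (hp0le _)
    · exact Real.log_nonpos (hp1pos _).le (hp1le _)
  refine ⟨hμprob, hμinv, ?_⟩
  intro ρ hρp hρinv
  haveI := hρp
  have h1 : β * (∫ x, H x ∂μ) + Real.log lam ≤ Real.log 2 := by
    rw [← htel μ hμprob hμinv, ← hGg]
    calc ∫ y, G y ∂μ ≤ ∫ _y, Real.log 2 ∂μ :=
          integral_mono (integ hGc μ) (integrable_const _) hGle
    _ = Real.log 2 := by simp
  have h2 : 0 ≤ β * (∫ x, H x ∂ρ) + Real.log lam := by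
    rw [← htel ρ hρp hρinv]
    exact integral_nonneg hgnn
  have h3 : β * (∫ x, H x ∂μ) ≤ β * ((∫ x, H x ∂ρ) + Real.log 2 / β) := by
    have h4 : β * ((∫ x, H x ∂ρ) + Real.log 2 / β) = β * (∫ x, H x ∂ρ) + Real.log 2 := by
      field_simp
    linarith
  exact le_of_mul_le_mul_left h3 hβ

end Helpers

/-- the Gibbs measures `μ_β` are shift-invariant probability measures, and any
weak* accumulation point as `β → +∞` is a minimizing measure of `H`. -/
theorem stmt_3 (H : Sig → ℝ) (hHc : Continuous H) (hHv : SummableVar H)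
    (Φ : ℝ → Sig → ℝ) (lam : ℝ → ℝ) (ν μ : ℝ → Measure Sig)
    (hG : ∀ β : ℝ, 0 < β → GibbsData H β (Φ β) (lam β) (ν β) (μ β)) :
    (∀ β : ℝ, 0 < β → IsProbabilityMeasure (μ β) ∧ (μ β).map shft = μ β) ∧
    ∀ (βj : ℕ → ℝ) (m : Measure Sig), Tendsto βj atTop atTop →
      (∀ f : Sig → ℝ, Continuous f →
        Tendsto (fun j => ∫ x, f x ∂(μ (βj j))) atTop (𝓝 (∫ x, f x ∂m))) →
      IsMinimizing H m := by
  have main : ∀ β : ℝ, 0 < β → IsProbabilityMeasure (μ β) ∧ (μ β).map shft = μ β ∧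
      ∀ ρ : Measure Sig, IsProbabilityMeasure ρ → ρ.map shft = ρ →
        ∫ x, H x ∂(μ β) ≤ (∫ x, H x ∂ρ) + Real.log 2 / β :=
    fun β hβ => gibbs_main hHc hβ (hG β hβ)
  refine ⟨fun β hβ => ⟨(main β hβ).1, (main β hβ).2.1⟩, ?_⟩
  intro βj m hβj hconv
  have hev : ∀ᶠ j in atTop, 0 < βj j := hβj.eventually_gt_atTop 0
  -- m is a probability measure
  have hm1 : ∫ _x, (1:ℝ) ∂m = 1 := by
    have hA := hconv (fun _ => (1:ℝ)) continuous_const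
    have hB : Tendsto (fun j => ∫ _x, (1:ℝ) ∂(μ (βj j))) atTop (𝓝 1) := by
      apply Tendsto.congr' _ tendsto_const_nhds
      filter_upwards [hev] with j hj
      haveI := (main _ hj).1
      simp
    exact tendsto_nhds_unique hA hB
  have hmprob : IsProbabilityMeasure m := by
    constructor
    have h : m.real Set.univ = 1 := by simpa using hm1
    exact (ENNReal.toReal_eq_one_iff _).mp h
  haveI := hmprob
  -- m is shift-invariant
  have hminv : m.map shft = m := by
    haveI : IsProbabilityMeasure (m.map shft) := Measure.isProbabilityMeasure_map meas_shft.aemeasurable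
    apply ext_of_forall_lintegral_eq_of_IsFiniteMeasure
    intro f
    have hfc : Continuous fun x => (f x : ℝ) := NNReal.continuous_coe.comp f.continuous
    rw [lintegral_coe_eq_integral f (integ hfc _), lintegral_coe_eq_integral f (integ hfc _)]
    congr 1
    rw [integral_map meas_shft.aemeasurable hfc.aestronglyMeasurable]
    have hA := hconv (fun x => (f (shft x) : ℝ)) (hfc.comp cont_shft)
    have hB := hconv (fun x => (f x : ℝ)) hfc
    have hE : (fun j => ∫ x, (f (shft x) : ℝ) ∂(μ (βj j)))
        =ᶠ[atTop] (fun j => ∫ x, (f x : ℝ) ∂(μ (βj j))) := by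
      filter_upwards [hev] with j hj
      conv_rhs => rw [← (main _ hj).2.1]
      rw [integral_map meas_shft.aemeasurable hfc.aestronglyMeasurable]
    exact tendsto_nhds_unique (hA.congr' hE) hB
  refine ⟨hmprob, hminv, ?_⟩
  intro ρ hρp hρinv
  have hH := hconv H hHc
  have hRHS : Tendsto (fun j => (∫ x, H x ∂ρ) + Real.log 2 / βj j) atTop
      (𝓝 ((∫ x, H x ∂ρ) + 0)) := by
    apply Tendsto.add tendsto_const_nhds
    have h0 := (hβj.inv_tendsto_atTop).const_mul (Real.log 2)
    simp only [mul_zero] at h0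
    simpa [div_eq_mul_inv] using h0
  have hle : (fun j => ∫ x, H x ∂(μ (βj j))) ≤ᶠ[atTop]
      fun j => (∫ x, H x ∂ρ) + Real.log 2 / βj j := by
    filter_upwards [hev] with j hj
    exact (main _ hj).2.2 ρ hρp hρinv
  have := le_of_tendsto_of_tendsto hH hRHS hle
  simpa using this
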